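/- Let p, γ, ν be real numbers with 0 < p < 1, let A₀ be a natural number, and let V : ℕ → ℝ satisfy the Bellman recursion V(A) = A − γ + ν + (1−p)·V(A+1) for every natural number A ≥ A₀, together with the growth condition (1−p)^A · V(A) → 0 as A → ∞. Then V(A) = (A − γ + ν)/p + (1−p)/p² for every A ≥ A₀. -/
import Mathlib

/-- If `V : ℕ → ℝ` satisfies the Bellman recursion
`V(A) = A − γ + ν + (1−p)·V(A+1)` for all `A ≥ A₀`, together with the growth
condition `(1−p)^A · V(A) → 0`, then `V(A) = (A − γ + ν)/p + (1−p)/p²`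
for all `A ≥ A₀`. -/
theorem bellman_recursion_closed_form (p γ ν : ℝ) (hp : 0 < p) (hp1 : p < 1)
    (A₀ : ℕ) (V : ℕ → ℝ)
    (hV : ∀ A : ℕ, A₀ ≤ A → V A = (A : ℝ) - γ + ν + (1 - p) * V (A + 1))
    (hgrowth : Filter.Tendsto (fun A : ℕ => (1 - p) ^ A * V A) Filter.atTop (nhds 0)) :
    ∀ A : ℕ, A₀ ≤ A → V A = ((A : ℝ) - γ + ν) / p + (1 - p) / p ^ 2 := by
  set f : ℕ → ℝ := fun A => ((A : ℝ) - γ + ν) / p + (1 - p) / p ^ 2 with hf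
  have hr0 : (0:ℝ) ≤ 1 - p := by linarith
  have hr1 : (1:ℝ) - p < 1 := by linarith
  have hp' : p ≠ 0 := ne_of_gt hp
  -- W A = V A - f A satisfies W A = (1-p) * W (A+1)
  have hstep : ∀ A : ℕ, A₀ ≤ A → V A - f A = (1 - p) * (V (A + 1) - f (A + 1)) := by
    intro A hA
    rw [hV A hA]
    simp only [hf]
    push_cast
    field_simp
    ring
  -- iterate
  have hiter : ∀ A : ℕ, A₀ ≤ A → ∀ n : ℕ,
      (1 - p) ^ A * (V A - f A) = (1 - p) ^ (A + n) * (V (A + n) - f (A + n)) := by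
    intro A hA n
    induction n with
    | zero => simp
    | succ k ih =>
      rw [ih, hstep (A + k) (le_trans hA (Nat.le_add_right _ _))]
      rw [show A + (k + 1) = (A + k) + 1 from rfl]
      ring
  -- (1-p)^m * f m → 0
  have hf0 : Filter.Tendsto (fun m : ℕ => (1 - p) ^ m * f m) Filter.atTop (nhds 0) := by
    have h1 := (tendsto_self_mul_const_pow_of_lt_one hr0 hr1).const_mul (1/p)
    have h2 := (tendsto_pow_atTop_nhds_zero_of_lt_one hr0 hr1).const_mul
      ((-γ + ν) / p + (1 - p) / p ^ 2)
    have := h1.add h2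
    simp only [mul_zero, add_zero] at this
    convert this using 2 with m
    simp only [hf]
    ring
  -- (1-p)^m * (V m - f m) → 0
  have hW0 : Filter.Tendsto (fun m : ℕ => (1 - p) ^ m * (V m - f m)) Filter.atTop (nhds 0) := by
    have := hgrowth.sub hf0
    simp only [sub_zero] at this
    convert this using 2 with m
    ring
  intro A hA
  -- constant sequence: (1-p)^A*(V A - f A) = limit of tail sequence = 0
  have hconst : Filter.Tendsto (fun n : ℕ => (1 - p) ^ (A + n) * (V (A + n) - f (A + n)))
      Filter.atTop (nhds 0) := by
    have h := hW0.comp (Filter.tendsto_add_atTop_nat A)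
    refine h.congr fun n => ?_
    simp [Function.comp, Nat.add_comm]
  have heq : Filter.Tendsto (fun _ : ℕ => (1 - p) ^ A * (V A - f A)) Filter.atTop (nhds 0) := by
    refine hconst.congr ?_
    intro n
    exact (hiter A hA n).symm
  have h0 : (1 - p) ^ A * (V A - f A) = 0 := tendsto_nhds_unique tendsto_const_nhds heq
  have hpow : (1 - p) ^ A ≠ 0 := by
    rcases eq_or_lt_of_le hr0 with h | h
    · -- 1 - p = 0 impossible since p < 1
      exact absurd h.symm (by linarith : (1:ℝ) - p ≠ 0).elim
    · exact pow_ne_zero _ (ne_of_gt h)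
  have : V A - f A = 0 := by
    rcases mul_eq_zero.mp h0 with h | h
    · exact absurd h hpow
    · exact h
  have h2 : V A = f A := sub_eq_zero.mp this
  simpa [hf] using h2
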